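/- Let d ≥ 2 be an integer and let g : ℂ⁴ → ℂ⁴ be a map satisfying g(G_X(u,v,w)) = G_X(T_d(u), T_d(v), T_d(w)) for all u, v, w ∈ ℂ (so g maps X_Q into X_Q). Then the set of bounded orbits {x ∈ X_Q : the sequence (gᵏ(x))_{k≥1} of iterates is bounded} equals {G_X(u,v,w) : u, v, w ∈ [−2,2] ⊂ ℝ}. -/

import Mathlib

open Polynomial

/-- The polynomial parametrization `G_X : ℂ³ → ℂ⁴`. -/
noncomputable def GX (u v w : ℂ) : ℂ × ℂ × ℂ × ℂ :=
  (v ^ 2 + u * v * w + w ^ 2,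
   (u + v * w) ^ 2,
   (u + v * w) * (2 * v * w + u * (v ^ 2 + w ^ 2) / 2),
   (2 * v * w + u * (v ^ 2 + w ^ 2) / 2) ^ 2)

private lemma cubic_root_bound (z b c e : ℂ) (h : z ^ 3 = b * z ^ 2 + c * z + e) :
    ‖z‖ ≤ max 1 (‖b‖ + ‖c‖ + ‖e‖) := by
  rcases le_or_gt ‖z‖ 1 with h1 | h1
  · exact h1.trans (le_max_left _ _)
  · refine le_trans ?_ (le_max_right _ _)
    have h2 : ‖z‖ ^ 3 ≤ (‖b‖ + ‖c‖ + ‖e‖) * ‖z‖ ^ 2 := by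
      calc ‖z‖ ^ 3 = ‖b * z ^ 2 + c * z + e‖ := by rw [← norm_pow, h]
        _ ≤ ‖b * z ^ 2‖ + ‖c * z‖ + ‖e‖ := norm_add₃_le
        _ = ‖b‖ * ‖z‖ ^ 2 + ‖c‖ * ‖z‖ + ‖e‖ := by
            rw [norm_mul, norm_mul, norm_pow]
        _ ≤ (‖b‖ + ‖c‖ + ‖e‖) * ‖z‖ ^ 2 := by
            have hz2 : ‖z‖ ≤ ‖z‖ ^ 2 := by nlinarith
            have hz1 : (1 : ℝ) ≤ ‖z‖ ^ 2 := by nlinarith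
            nlinarith [mul_le_mul_of_nonneg_left hz2 (norm_nonneg c),
              mul_le_mul_of_nonneg_left hz1 (norm_nonneg e)]
    have hzp : (0 : ℝ) < ‖z‖ ^ 2 := by positivity
    have h3 : ‖z‖ * ‖z‖ ^ 2 ≤ (‖b‖ + ‖c‖ + ‖e‖) * ‖z‖ ^ 2 := by
      calc ‖z‖ * ‖z‖ ^ 2 = ‖z‖ ^ 3 := by ring
        _ ≤ (‖b‖ + ‖c‖ + ‖e‖) * ‖z‖ ^ 2 := h2
    exact le_of_mul_le_mul_right h3 hzp

private lemma cheb_iter (d : ℕ) (T : Polynomial ℤ)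
    (hT : ∀ s : ℂ, s ≠ 0 → Polynomial.aeval (s + s⁻¹) T = s ^ (d : ℤ) + s ^ (-(d : ℤ)))
    (s : ℂ) (hs : s ≠ 0) :
    ∀ k : ℕ, (fun z : ℂ => Polynomial.aeval z T)^[k] (s + s⁻¹)
      = s ^ ((d : ℤ) ^ k) + s ^ (-((d : ℤ) ^ k)) := by
  intro k
  induction k with
  | zero => simp
  | succ k ih =>
    rw [Function.iterate_succ_apply', ih]
    have h1 : s ^ ((d : ℤ) ^ k) ≠ 0 := zpow_ne_zero _ hs
    calc (fun z : ℂ => Polynomial.aeval z T) (s ^ ((d:ℤ)^k) + s ^ (-((d:ℤ)^k)))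
        = Polynomial.aeval ((s ^ ((d:ℤ)^k)) + (s ^ ((d:ℤ)^k))⁻¹) T := by rw [zpow_neg]
      _ = (s ^ ((d:ℤ)^k)) ^ (d:ℤ) + (s ^ ((d:ℤ)^k)) ^ (-(d:ℤ)) := hT _ h1
      _ = s ^ ((d:ℤ)^(k+1)) + s ^ (-((d:ℤ)^(k+1))) := by
          rw [← zpow_mul, ← zpow_mul, pow_succ, mul_neg]

private lemma cheb_bounded (d : ℕ) (hd : 2 ≤ d) (T : Polynomial ℤ)
    (hT : ∀ s : ℂ, s ≠ 0 → Polynomial.aeval (s + s⁻¹) T = s ^ (d : ℤ) + s ^ (-(d : ℤ)))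
    (u : ℂ) (M : ℝ)
    (hb : ∀ k : ℕ, ‖(fun z : ℂ => Polynomial.aeval z T)^[k + 1] u‖ ≤ M) :
    ∃ x : ℝ, x ∈ Set.Icc (-2 : ℝ) 2 ∧ (x : ℂ) = u := by
  have hdeg : (X ^ 2 - C u * X + 1 : ℂ[X]).degree = 2 := by compute_degree!
  obtain ⟨s, hs⟩ := Complex.exists_root (f := X ^ 2 - C u * X + 1) (by rw [hdeg]; norm_num)
  have hs' : s ^ 2 - u * s + 1 = 0 := by
    have := hs
    simp only [Polynomial.IsRoot.def, Polynomial.eval_add, Polynomial.eval_sub,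
      Polynomial.eval_mul, Polynomial.eval_pow, Polynomial.eval_C, Polynomial.eval_X,
      Polynomial.eval_one] at this
    linear_combination this
  have hs0 : s ≠ 0 := by
    rintro rfl
    simp at hs'
  have hsu : s + s⁻¹ = u := by
    field_simp
    linear_combination hs'
  have key : ∀ t : ℂ, t ≠ 0 → t + t⁻¹ = u → ‖t‖ ≤ 1 := by
    intro t ht0 htu
    by_contra hgt
    push_neg at hgt
    obtain ⟨n, hn⟩ := pow_unbounded_of_one_lt (M + 1) hgt
    have hk := hb n
    rw [← htu, cheb_iter d T hT t ht0 (n + 1)] at hk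
    set e : ℤ := (d : ℤ) ^ (n + 1) with he
    have hde : ((d ^ (n + 1) : ℕ) : ℤ) = e := by push_cast [he]; ring
    have h1 : ‖t ^ e‖ = ‖t‖ ^ (d ^ (n + 1) : ℕ) := by
      rw [← hde, zpow_natCast, norm_pow]
    have hone : (1 : ℝ) ≤ ‖t‖ ^ (d ^ (n + 1) : ℕ) := one_le_pow₀ hgt.le
    have h2 : ‖t ^ (-e)‖ ≤ 1 := by
      rw [zpow_neg, norm_inv, h1]
      exact inv_le_one_of_one_le₀ hone
    have h5 : ‖t ^ e‖ ≤ ‖t ^ e + t ^ (-e)‖ + ‖t ^ (-e)‖ := by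
      simpa using norm_sub_le (t ^ e + t ^ (-e)) (t ^ (-e))
    have hnN : n ≤ d ^ (n + 1) := by
      calc n ≤ 2 ^ n := (Nat.lt_two_pow_self (n := n)).le
        _ ≤ 2 ^ (n + 1) := Nat.pow_le_pow_right (by norm_num) (by omega)
        _ ≤ d ^ (n + 1) := Nat.pow_le_pow_left hd _
    have h6 : ‖t‖ ^ n ≤ ‖t‖ ^ (d ^ (n + 1) : ℕ) := pow_le_pow_right₀ hgt.le hnN
    rw [h1] at h5
    linarith
  have k1 := key s hs0 hsu
  have k2 := key s⁻¹ (inv_ne_zero hs0) (by rw [inv_inv, add_comm]; exact hsu)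
  have hpos : 0 < ‖s‖ := norm_pos_iff.mpr hs0
  have hge : 1 ≤ ‖s‖ := by
    rw [norm_inv] at k2
    have := mul_le_mul_of_nonneg_right k2 hpos.le
    rwa [inv_mul_cancel₀ hpos.ne', one_mul] at this
  have habs : ‖s‖ = 1 := le_antisymm k1 hge
  have hnsq : Complex.normSq s = 1 := by
    have : ‖s‖ = 1 := habs
    rw [← Complex.sq_norm, this, one_pow]
  have hconj : s⁻¹ = (starRingEnd ℂ) s := by
    refine inv_eq_of_mul_eq_one_right ?_
    rw [Complex.mul_conj, hnsq, Complex.ofReal_one]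
  refine ⟨2 * s.re, ⟨?_, ?_⟩, ?_⟩
  · have h := Complex.abs_re_le_norm s
    rw [habs] at h
    have := abs_le.mp h
    linarith [this.1]
  · have h := Complex.abs_re_le_norm s
    rw [habs] at h
    have := abs_le.mp h
    linarith [this.2]
  · rw [← hsu, hconj, Complex.add_conj]

private lemma cheb_in_Icc (d : ℕ) (T : Polynomial ℤ)
    (hT : ∀ s : ℂ, s ≠ 0 → Polynomial.aeval (s + s⁻¹) T = s ^ (d : ℤ) + s ^ (-(d : ℤ)))
    (x : ℝ) (hx : x ∈ Set.Icc (-2 : ℝ) 2) :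
    ∀ k : ℕ, ‖(fun z : ℂ => Polynomial.aeval z T)^[k] (x : ℂ)‖ ≤ 2 := by
  obtain ⟨hx1, hx2⟩ := hx
  set s : ℂ := ⟨x / 2, Real.sqrt (1 - (x / 2) ^ 2)⟩ with hsdef
  have hsq : (x / 2) ^ 2 ≤ 1 := by nlinarith
  have hnsq : Complex.normSq s = 1 := by
    rw [Complex.normSq_apply]
    show x / 2 * (x / 2) + Real.sqrt (1 - (x / 2) ^ 2) * Real.sqrt (1 - (x / 2) ^ 2) = 1
    rw [Real.mul_self_sqrt (by nlinarith)]
    ring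
  have habs : ‖s‖ = 1 := by
    rw [Complex.norm_def, hnsq, Real.sqrt_one]
  have hs0 : s ≠ 0 := by
    intro h
    rw [h] at habs
    simp at habs
  have hconj : s⁻¹ = (starRingEnd ℂ) s := by
    refine inv_eq_of_mul_eq_one_right ?_
    rw [Complex.mul_conj, hnsq, Complex.ofReal_one]
  have hsu : s + s⁻¹ = (x : ℂ) := by
    rw [hconj, Complex.add_conj]
    push_cast
    show 2 * (((x / 2 : ℝ)) : ℂ) = (x : ℂ)
    push_cast
    ring
  intro k
  rw [← hsu, cheb_iter d T hT s hs0 k]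
  have h1 : ‖s ^ ((d : ℤ) ^ k)‖ = 1 := by rw [norm_zpow, habs, one_zpow]
  have h2 : ‖s ^ (-((d : ℤ) ^ k))‖ = 1 := by rw [norm_zpow, habs, one_zpow]
  calc ‖s ^ ((d:ℤ)^k) + s ^ (-((d:ℤ)^k))‖ ≤ ‖s ^ ((d:ℤ)^k)‖ + ‖s ^ (-((d:ℤ)^k))‖ :=
        norm_add_le _ _
    _ = 2 := by rw [h1, h2]; norm_num

private lemma GX_norm_le {a b c : ℂ} (ha : ‖a‖ ≤ 2) (hb : ‖b‖ ≤ 2) (hc : ‖c‖ ≤ 2) :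
    ‖GX a b c‖ ≤ 256 := by
  have hb0 := norm_nonneg b
  have hc0 := norm_nonneg c
  have ha0 := norm_nonneg a
  have hbc : ‖b * c‖ ≤ 4 := by rw [norm_mul]; nlinarith
  have hb2 : ‖b ^ 2‖ ≤ 4 := by rw [norm_pow]; nlinarith
  have hc2 : ‖c ^ 2‖ ≤ 4 := by rw [norm_pow]; nlinarith
  have habc : ‖a * b * c‖ ≤ 8 := by
    rw [norm_mul, norm_mul]
    have h1 : ‖a‖ * ‖b‖ ≤ 4 := by nlinarith
    calc ‖a‖ * ‖b‖ * ‖c‖ ≤ 4 * 2 := mul_le_mul h1 hc hc0 (by norm_num)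
      _ = 8 := by norm_num
  have hP : ‖b ^ 2 + a * b * c + c ^ 2‖ ≤ 16 := by
    calc ‖b ^ 2 + a * b * c + c ^ 2‖ ≤ ‖b ^ 2‖ + ‖a * b * c‖ + ‖c ^ 2‖ := norm_add₃_le
      _ ≤ 16 := by linarith
  have hQin : ‖a + b * c‖ ≤ 6 := by
    calc ‖a + b * c‖ ≤ ‖a‖ + ‖b * c‖ := norm_add_le _ _
      _ ≤ 6 := by linarith
  have hsum : ‖b ^ 2 + c ^ 2‖ ≤ 8 := by
    calc ‖b ^ 2 + c ^ 2‖ ≤ ‖b ^ 2‖ + ‖c ^ 2‖ := norm_add_le _ _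
      _ ≤ 8 := by linarith
  have hm : ‖2 * b * c + a * (b ^ 2 + c ^ 2) / 2‖ ≤ 16 := by
    have h1 : ‖2 * b * c‖ ≤ 8 := by
      rw [norm_mul, norm_mul]
      have h2 : ‖(2 : ℂ)‖ = 2 := by norm_num
      rw [h2]
      have h1 : (2 : ℝ) * ‖b‖ ≤ 4 := by nlinarith
      calc 2 * ‖b‖ * ‖c‖ ≤ 4 * 2 := mul_le_mul h1 hc hc0 (by norm_num)
        _ = 8 := by norm_num
    have h2 : ‖a * (b ^ 2 + c ^ 2) / 2‖ ≤ 8 := by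
      rw [norm_div, norm_mul]
      have h2 : ‖(2 : ℂ)‖ = 2 := by norm_num
      rw [h2]
      have h1 : ‖a‖ * ‖b ^ 2 + c ^ 2‖ ≤ 16 :=
        (mul_le_mul ha hsum (norm_nonneg _) (by norm_num)).trans (by norm_num)
      linarith
    calc ‖2 * b * c + a * (b ^ 2 + c ^ 2) / 2‖
        ≤ ‖2 * b * c‖ + ‖a * (b ^ 2 + c ^ 2) / 2‖ := norm_add_le _ _
      _ ≤ 16 := by linarith
  have hQ : ‖(a + b * c) ^ 2‖ ≤ 36 := by
    rw [norm_pow]; nlinarith [norm_nonneg (a + b * c)]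
  have hR : ‖(a + b * c) * (2 * b * c + a * (b ^ 2 + c ^ 2) / 2)‖ ≤ 96 := by
    rw [norm_mul]
    calc ‖a + b * c‖ * ‖2 * b * c + a * (b ^ 2 + c ^ 2) / 2‖ ≤ 6 * 16 :=
          mul_le_mul hQin hm (norm_nonneg _) (by norm_num)
      _ = 96 := by norm_num
  have hS : ‖(2 * b * c + a * (b ^ 2 + c ^ 2) / 2) ^ 2‖ ≤ 256 := by
    rw [norm_pow]
    nlinarith [norm_nonneg (2 * b * c + a * (b ^ 2 + c ^ 2) / 2)]
  show ‖(_, _, _, _)‖ ≤ (256 : ℝ)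
  rw [Prod.norm_def, Prod.norm_def, Prod.norm_def]
  refine max_le (by simpa using hP.trans (by norm_num)) (max_le (by simpa using hQ.trans (by norm_num)) (max_le (by simpa using hR.trans (by norm_num)) (by simpa using hS)))

theorem K_set_on_XQ (d : ℕ) (hd : 2 ≤ d) (T : Polynomial ℤ)
    (hT : ∀ s : ℂ, s ≠ 0 → Polynomial.aeval (s + s⁻¹) T = s ^ (d : ℤ) + s ^ (-(d : ℤ)))
    (g : ℂ × ℂ × ℂ × ℂ → ℂ × ℂ × ℂ × ℂ)
    (hg : ∀ u v w : ℂ, g (GX u v w)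
      = GX (Polynomial.aeval u T) (Polynomial.aeval v T) (Polynomial.aeval w T)) :
    {x : ℂ × ℂ × ℂ × ℂ | x.2.2.1 ^ 2 = x.2.1 * x.2.2.2 ∧
        Bornology.IsBounded (Set.range fun k : ℕ => g^[k + 1] x)}
      = {x : ℂ × ℂ × ℂ × ℂ | ∃ u v w : ℝ,
          u ∈ Set.Icc (-2 : ℝ) 2 ∧ v ∈ Set.Icc (-2 : ℝ) 2 ∧ w ∈ Set.Icc (-2 : ℝ) 2 ∧
          GX (u : ℂ) (v : ℂ) (w : ℂ) = x} := by
  have hgk : ∀ (k : ℕ) (α β γ : ℂ), g^[k] (GX α β γ)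
      = GX ((fun z : ℂ => Polynomial.aeval z T)^[k] α)
          ((fun z : ℂ => Polynomial.aeval z T)^[k] β)
          ((fun z : ℂ => Polynomial.aeval z T)^[k] γ) := by
    intro k
    induction k with
    | zero => intro α β γ; simp
    | succ k ih =>
      intro α β γ
      simp only [Function.iterate_succ_apply, hg]
      exact ih _ _ _
  ext x
  simp only [Set.mem_setOf_eq]
  constructor
  · rintro ⟨hx, hb⟩
    obtain ⟨p, q, r, s⟩ := x
    have hx' : r ^ 2 = q * s := hx
    obtain ⟨M, hM⟩ := hb.exists_norm_le
    have hM' : ∀ k : ℕ, ‖g^[k + 1] ((p, q, r, s) : ℂ × ℂ × ℂ × ℂ)‖ ≤ M :=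
      fun k => hM _ ⟨k, rfl⟩
    have hM0 : 0 ≤ M := le_trans (norm_nonneg _) (hM' 0)
    obtain ⟨a, ha⟩ := IsAlgClosed.exists_pow_nat_eq (k := ℂ) q (n := 2) two_pos
    obtain ⟨m, hm2, hmr⟩ : ∃ m : ℂ, m ^ 2 = s ∧ a * m = r := by
      rcases eq_or_ne a 0 with h0 | h0
      · obtain ⟨m, hm⟩ := IsAlgClosed.exists_pow_nat_eq (k := ℂ) s (n := 2) two_pos
        have hq0 : q = 0 := by rw [← ha, h0]; ring
        have hr0 : r = 0 := by
          have h2 : r ^ 2 = 0 := by rw [hx', hq0, zero_mul]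
          exact pow_eq_zero_iff two_ne_zero |>.mp h2
        exact ⟨m, hm, by rw [h0, hr0, zero_mul]⟩
      · refine ⟨r / a, ?_, ?_⟩
        · field_simp
          linear_combination hx' - s * ha
        · field_simp
    have hdeg : (X ^ 3 - C a * X ^ 2 + C (p - 4) * X + C (4 * a - 2 * m) : ℂ[X]).degree = 3 := by
      compute_degree!
    obtain ⟨u, hu⟩ := Complex.exists_root
      (f := X ^ 3 - C a * X ^ 2 + C (p - 4) * X + C (4 * a - 2 * m)) (by rw [hdeg]; norm_num)
    have hcub : u ^ 3 - a * u ^ 2 + (p - 4) * u + (4 * a - 2 * m) = 0 := by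
      have h := hu
      simp only [Polynomial.IsRoot.def, Polynomial.eval_add, Polynomial.eval_sub,
        Polynomial.eval_mul, Polynomial.eval_pow, Polynomial.eval_C, Polynomial.eval_X] at h
      linear_combination h
    obtain ⟨σ, hσ⟩ := IsAlgClosed.exists_pow_nat_eq (k := ℂ)
      ((p - u * (a - u)) + 2 * (a - u)) (n := 2) two_pos
    obtain ⟨δ, hδ⟩ := IsAlgClosed.exists_pow_nat_eq (k := ℂ)
      ((p - u * (a - u)) - 2 * (a - u)) (n := 2) two_pos
    set v : ℂ := (σ + δ) / 2 with hv
    set w : ℂ := (σ - δ) / 2 with hw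
    have hA : v * w = a - u := by
      rw [hv, hw]; linear_combination ((1 : ℂ)/4) * hσ - ((1 : ℂ)/4) * hδ
    have hB : v ^ 2 + w ^ 2 = p - u * (a - u) := by
      rw [hv, hw]; linear_combination ((1 : ℂ)/2) * hσ + ((1 : ℂ)/2) * hδ
    have hq' : u + v * w = a := by linear_combination hA
    have hm' : 2 * (v * w) + u * (v ^ 2 + w ^ 2) / 2 = m := by
      linear_combination 2 * hA + (u/2) * hB + ((1 : ℂ)/2) * hcub
    have hGX : GX u v w = ((p, q, r, s) : ℂ × ℂ × ℂ × ℂ) := by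
      simp only [GX, Prod.mk.injEq]
      refine ⟨?_, ?_, ?_, ?_⟩
      · linear_combination hB + u * hA
      · linear_combination (u + v * w + a) * hq' + ha
      · linear_combination (2 * v * w + u * (v ^ 2 + w ^ 2) / 2) * hq' + a * hm' + hmr
      · linear_combination (2 * v * w + u * (v ^ 2 + w ^ 2) / 2 + m) * hm' + hm2
    -- uniform bounds on parameter orbits
    set CU : ℝ := Real.sqrt (max 1 (51 * M + 8 + (M + 4) ^ 2)) with hCU
    set B2 : ℝ := Real.sqrt M + CU with hB2
    set B3 : ℝ := M + CU * B2 with hB3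
    set CV : ℝ := Real.sqrt (max 1 (B3 + B2 ^ 2 + 0)) with hCV
    have hbnd : ∀ α β γ : ℂ, ‖GX α β γ‖ ≤ M → ‖α‖ ≤ CU ∧ ‖β‖ ≤ CV ∧ ‖γ‖ ≤ CV := by
      intro α β γ h
      have h1 := le_trans (norm_fst_le (GX α β γ)) h
      have h2 := le_trans ((norm_fst_le (GX α β γ).2).trans (norm_snd_le (GX α β γ))) h
      have h3 := le_trans ((norm_fst_le (GX α β γ).2.2).trans
        ((norm_snd_le (GX α β γ).2).trans (norm_snd_le (GX α β γ)))) h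
      have h4 := le_trans ((norm_snd_le (GX α β γ).2.2).trans
        ((norm_snd_le (GX α β γ).2).trans (norm_snd_le (GX α β γ)))) h
      simp only [GX] at h1 h2 h3 h4
      set P : ℂ := β ^ 2 + α * β * γ + γ ^ 2 with hP
      set Q : ℂ := (α + β * γ) ^ 2 with hQ
      set R : ℂ := (α + β * γ) * (2 * β * γ + α * (β ^ 2 + γ ^ 2) / 2) with hR
      set S : ℂ := (2 * β * γ + α * (β ^ 2 + γ ^ 2) / 2) ^ 2 with hS
      have hcu : (α ^ 2) ^ 3 = (Q - 2 * (P - 4)) * (α ^ 2) ^ 2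
          + (4 * R - 8 * Q - (P - 4) ^ 2) * (α ^ 2)
          + (16 * Q - 16 * R + 4 * S) := by
        rw [hP, hQ, hR, hS]; ring
      have hc4 : ‖Q - 2 * (P - 4)‖ ≤ 3 * M + 8 := by
        have e1 : ‖P - 4‖ ≤ M + 4 := by
          calc ‖P - 4‖ ≤ ‖P‖ + ‖(4 : ℂ)‖ := norm_sub_le _ _
            _ ≤ M + 4 := by
                have : ‖(4 : ℂ)‖ = 4 := by norm_num
                linarith
        calc ‖Q - 2 * (P - 4)‖ ≤ ‖Q‖ + ‖2 * (P - 4)‖ := norm_sub_le _ _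
          _ = ‖Q‖ + 2 * ‖P - 4‖ := by
              rw [norm_mul]
              have : ‖(2 : ℂ)‖ = 2 := by norm_num
              rw [this]
          _ ≤ 3 * M + 8 := by linarith
      have hc2 : ‖4 * R - 8 * Q - (P - 4) ^ 2‖ ≤ 12 * M + (M + 4) ^ 2 := by
        have e1 : ‖P - 4‖ ≤ M + 4 := by
          calc ‖P - 4‖ ≤ ‖P‖ + ‖(4 : ℂ)‖ := norm_sub_le _ _
            _ ≤ M + 4 := by
                have : ‖(4 : ℂ)‖ = 4 := by norm_num
                linarith
        have e2 : ‖(P - 4) ^ 2‖ ≤ (M + 4) ^ 2 := by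
          rw [norm_pow]
          exact pow_le_pow_left₀ (norm_nonneg _) e1 2
        have e3 : ‖4 * R - 8 * Q‖ ≤ 12 * M := by
          calc ‖4 * R - 8 * Q‖ ≤ ‖4 * R‖ + ‖8 * Q‖ := norm_sub_le _ _
            _ = 4 * ‖R‖ + 8 * ‖Q‖ := by
                rw [norm_mul, norm_mul]
                norm_num
            _ ≤ 12 * M := by linarith
        calc ‖4 * R - 8 * Q - (P - 4) ^ 2‖ ≤ ‖4 * R - 8 * Q‖ + ‖(P - 4) ^ 2‖ := norm_sub_le _ _
          _ ≤ 12 * M + (M + 4) ^ 2 := by linarith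
      have hc0 : ‖16 * Q - 16 * R + 4 * S‖ ≤ 36 * M := by
        have e16 : ‖(16 : ℂ)‖ = 16 := by norm_num
        have e4 : ‖(4 : ℂ)‖ = 4 := by norm_num
        calc ‖16 * Q - 16 * R + 4 * S‖ ≤ ‖16 * Q - 16 * R‖ + ‖4 * S‖ := norm_add_le _ _
          _ ≤ ‖16 * Q‖ + ‖16 * R‖ + ‖4 * S‖ := by linarith [norm_sub_le (16 * Q) (16 * R)]
          _ = 16 * ‖Q‖ + 16 * ‖R‖ + 4 * ‖S‖ := by
              rw [norm_mul, norm_mul, norm_mul]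
              norm_num
          _ ≤ 36 * M := by linarith
      have hαsq : ‖α ^ 2‖ ≤ max 1 (51 * M + 8 + (M + 4) ^ 2) := by
        refine le_trans (cubic_root_bound _ _ _ _ hcu) ?_
        exact max_le_max le_rfl (by linarith)
      have hα : ‖α‖ ≤ CU := by
        rw [hCU, ← Real.sqrt_sq (norm_nonneg α)]
        exact Real.sqrt_le_sqrt (by rw [← norm_pow]; exact hαsq)
      refine ⟨hα, ?_, ?_⟩
      · -- bound on β
        have hαA : ‖α + β * γ‖ ≤ Real.sqrt M := by
          rw [← Real.sqrt_sq (norm_nonneg (α + β * γ))]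
          exact Real.sqrt_le_sqrt (by rw [← norm_pow]; exact h2)
        have hA' : ‖β * γ‖ ≤ B2 := by
          have : β * γ = (α + β * γ) - α := by ring
          rw [this]
          calc ‖(α + β * γ) - α‖ ≤ ‖α + β * γ‖ + ‖α‖ := norm_sub_le _ _
            _ ≤ B2 := by rw [hB2]; linarith
        have hB' : ‖β ^ 2 + γ ^ 2‖ ≤ B3 := by
          have hPe : β ^ 2 + γ ^ 2 = P - α * (β * γ) := by rw [hP]; ring
          rw [hPe]
          calc ‖P - α * (β * γ)‖ ≤ ‖P‖ + ‖α‖ * ‖β * γ‖ := by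
                rw [← norm_mul]; exact norm_sub_le _ _
            _ ≤ M + CU * B2 := by
                have : ‖α‖ * ‖β * γ‖ ≤ CU * B2 :=
                  mul_le_mul hα hA' (norm_nonneg _) ((norm_nonneg α).trans hα)
                linarith
            _ = B3 := hB3.symm
        have hcv : (β ^ 2) ^ 3 = (β ^ 2 + γ ^ 2) * (β ^ 2) ^ 2
            + (-((β * γ) ^ 2)) * (β ^ 2) + 0 := by ring
        have hβsq : ‖β ^ 2‖ ≤ max 1 (B3 + B2 ^ 2 + 0) := by
          refine le_trans (cubic_root_bound _ _ _ _ hcv) ?_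
          refine max_le_max le_rfl ?_
          have e1 : ‖-((β * γ) ^ 2)‖ ≤ B2 ^ 2 := by
            rw [norm_neg, norm_pow]
            exact pow_le_pow_left₀ (norm_nonneg _) hA' 2
          have e0 : ‖(0 : ℂ)‖ = 0 := norm_zero
          linarith
        rw [hCV, ← Real.sqrt_sq (norm_nonneg β)]
        exact Real.sqrt_le_sqrt (by rw [← norm_pow]; exact hβsq)
      · -- bound on γ
        have hαA : ‖α + β * γ‖ ≤ Real.sqrt M := by
          rw [← Real.sqrt_sq (norm_nonneg (α + β * γ))]
          exact Real.sqrt_le_sqrt (by rw [← norm_pow]; exact h2)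
        have hA' : ‖β * γ‖ ≤ B2 := by
          have : β * γ = (α + β * γ) - α := by ring
          rw [this]
          calc ‖(α + β * γ) - α‖ ≤ ‖α + β * γ‖ + ‖α‖ := norm_sub_le _ _
            _ ≤ B2 := by rw [hB2]; linarith
        have hB' : ‖β ^ 2 + γ ^ 2‖ ≤ B3 := by
          have hPe : β ^ 2 + γ ^ 2 = P - α * (β * γ) := by rw [hP]; ring
          rw [hPe]
          calc ‖P - α * (β * γ)‖ ≤ ‖P‖ + ‖α‖ * ‖β * γ‖ := by
                rw [← norm_mul]; exact norm_sub_le _ _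
            _ ≤ M + CU * B2 := by
                have : ‖α‖ * ‖β * γ‖ ≤ CU * B2 :=
                  mul_le_mul hα hA' (norm_nonneg _) ((norm_nonneg α).trans hα)
                linarith
            _ = B3 := hB3.symm
        have hcv : (γ ^ 2) ^ 3 = (β ^ 2 + γ ^ 2) * (γ ^ 2) ^ 2
            + (-((β * γ) ^ 2)) * (γ ^ 2) + 0 := by ring
        have hγsq : ‖γ ^ 2‖ ≤ max 1 (B3 + B2 ^ 2 + 0) := by
          refine le_trans (cubic_root_bound _ _ _ _ hcv) ?_
          refine max_le_max le_rfl ?_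
          have e1 : ‖-((β * γ) ^ 2)‖ ≤ B2 ^ 2 := by
            rw [norm_neg, norm_pow]
            exact pow_le_pow_left₀ (norm_nonneg _) hA' 2
          have e0 : ‖(0 : ℂ)‖ = 0 := norm_zero
          linarith
        rw [hCV, ← Real.sqrt_sq (norm_nonneg γ)]
        exact Real.sqrt_le_sqrt (by rw [← norm_pow]; exact hγsq)
    have horb : ∀ k : ℕ,
        ‖(fun z : ℂ => Polynomial.aeval z T)^[k + 1] u‖ ≤ CU ∧
        ‖(fun z : ℂ => Polynomial.aeval z T)^[k + 1] v‖ ≤ CV ∧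
        ‖(fun z : ℂ => Polynomial.aeval z T)^[k + 1] w‖ ≤ CV := by
      intro k
      have h := hM' k
      rw [← hGX, hgk] at h
      exact hbnd _ _ _ h
    obtain ⟨u₀, hu₀, hu₀e⟩ := cheb_bounded d hd T hT u CU (fun k => (horb k).1)
    obtain ⟨v₀, hv₀, hv₀e⟩ := cheb_bounded d hd T hT v CV (fun k => (horb k).2.1)
    obtain ⟨w₀, hw₀, hw₀e⟩ := cheb_bounded d hd T hT w CV (fun k => (horb k).2.2)
    exact ⟨u₀, v₀, w₀, hu₀, hv₀, hw₀, by rw [hu₀e, hv₀e, hw₀e]; exact hGX⟩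
  · rintro ⟨u₀, v₀, w₀, hu₀, hv₀, hw₀, rfl⟩
    constructor
    · show (GX _ _ _).2.2.1 ^ 2 = (GX _ _ _).2.1 * (GX _ _ _).2.2.2
      simp only [GX]
      ring
    · have hsub : Set.range (fun k : ℕ => g^[k + 1] (GX (u₀ : ℂ) (v₀ : ℂ) (w₀ : ℂ)))
          ⊆ Metric.closedBall 0 256 := by
        rintro y ⟨k, rfl⟩
        show g^[k + 1] (GX (u₀ : ℂ) (v₀ : ℂ) (w₀ : ℂ)) ∈ Metric.closedBall 0 256
        rw [Metric.mem_closedBall, dist_zero_right, hgk]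
        exact GX_norm_le (cheb_in_Icc d T hT u₀ hu₀ (k + 1))
          (cheb_in_Icc d T hT v₀ hv₀ (k + 1)) (cheb_in_Icc d T hT w₀ hw₀ (k + 1))
      exact Metric.isBounded_closedBall.subset hsub
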